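/- Let a be an odd positive integer and b an even positive integer. Then there is no real number φ such that sin(a(t + φ)) + sin(b(t + φ)) = −(sin(a t) + sin(b t)) for all real t; that is, the waveform t ↦ sin(at) + sin(bt) is non-antiperiodic. -/

import Mathlib

open Real

/-- When `a` is odd and `b` is even (both positive), the waveform
`sin(at) + sin(bt)` is non-antiperiodic: no shift `φ` negates it. -/
theorem waveform_non_antiperiodic (a b : ℕ) (ha : 0 < a) (hb : 0 < b)
    (hao : Odd a) (hbe : Even b) :
    ¬ ∃ φ : ℝ, ∀ t : ℝ,
      Real.sin (a * (t + φ)) + Real.sin (b * (t + φ)) =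
        -(Real.sin (a * t) + Real.sin (b * t)) := by
  rintro ⟨φ, h⟩
  have hπ : (0:ℝ) < π := Real.pi_pos
  have hb' : (b:ℝ) ≠ 0 := Nat.cast_ne_zero.mpr hb.ne'
  have key : ∀ t : ℝ, Real.sin (a*t) * Real.cos (a*(φ/2)) +
      Real.sin (b*t) * Real.cos (b*(φ/2)) = 0 := by
    intro t
    have H := h (t - φ/2)
    have e1 : (a:ℝ) * (t - φ/2 + φ) = a*t + a*(φ/2) := by ring
    have e2 : (b:ℝ) * (t - φ/2 + φ) = b*t + b*(φ/2) := by ring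
    have e3 : (a:ℝ) * (t - φ/2) = a*t - a*(φ/2) := by ring
    have e4 : (b:ℝ) * (t - φ/2) = b*t - b*(φ/2) := by ring
    rw [e1, e2, e3, e4, Real.sin_add, Real.sin_add, Real.sin_sub, Real.sin_sub] at H
    linarith
  have hA : Real.cos ((a:ℝ)*(φ/2)) = 0 := by
    have H := key (π / b)
    have eb : (b:ℝ) * (π / b) = π := by field_simp
    rw [eb, Real.sin_pi, zero_mul, add_zero] at H
    have hs : Real.sin ((a:ℝ) * (π / b)) ≠ 0 := by
      intro hs0
      obtain ⟨n, hn⟩ := Real.sin_eq_zero_iff.mp hs0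
      have h1 : (n:ℝ) * b = a := by
        field_simp at hn
        have hn' : ((n:ℝ) * b) * π = (a:ℝ) * π := by linear_combination π * hn
        exact mul_right_cancel₀ hπ.ne' hn'
      have h2 : n * (b:ℤ) = (a:ℤ) := by exact_mod_cast h1
      obtain ⟨c, hc⟩ := hbe
      have : Even (a:ℤ) := ⟨n * c, by push_cast [hc] at h2 ⊢; linarith⟩
      have hae : Even a := by exact_mod_cast this
      exact ((Nat.not_even_iff_odd.mpr hao)) hae
    exact (mul_eq_zero.mp H).resolve_left hs
  have hB : Real.cos ((b:ℝ)*(φ/2)) = 0 := by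
    have H := key (π / (2*b))
    have eb : (b:ℝ) * (π / (2*b)) = π/2 := by field_simp
    rw [eb, Real.sin_pi_div_two, one_mul, hA, mul_zero, zero_add] at H
    exact H
  obtain ⟨k, hk⟩ := Real.cos_eq_zero_iff.mp hA
  obtain ⟨m, hm⟩ := Real.cos_eq_zero_iff.mp hB
  have hmain : (b:ℝ) * (2*k+1) = (a:ℝ) * (2*m+1) := by
    have h1 : (b:ℝ) * ((a:ℝ)*(φ/2)) = (a:ℝ) * ((b:ℝ)*(φ/2)) := by ring
    rw [hk, hm] at h1
    have hπ' : π ≠ 0 := hπ.ne'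
    field_simp at h1
    have h2 : ((b:ℝ)*(2*k+1))*π = ((a:ℝ)*(2*m+1))*π := by linear_combination π * h1
    exact mul_right_cancel₀ hπ' h2
  have hmain' : (b:ℤ) * (2*k+1) = (a:ℤ) * (2*m+1) := by exact_mod_cast hmain
  have heven : Even ((b:ℤ) * (2*k+1)) := (Int.even_coe_nat b |>.mpr hbe).mul_right _
  have hodd : Odd ((a:ℤ) * (2*m+1)) := (Int.odd_coe_nat a |>.mpr hao).mul ⟨m, by ring⟩
  rw [hmain'] at heven
  exact ((Int.not_odd_iff_even.mpr heven)) hodd
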